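/- For a balanced asymmetric chain with constant M, for any nonempty proper subset T of S and any n, ∑_{i∈T}∑_{j∉T}(a_{ij}(n)+a_{ji}(n)) ≤ (M+1) ∑_{i∉T}∑_{j∈T} a_{ij}(n). Consequently, for a balanced asymmetric chain the infinite flow property holds if and only if ∑_{n=0}^∞ ∑_{i∉T}∑_{j∈T} a_{ij}(n) = ∞ for every nonempty proper subset T of S. -/

import Mathlib

open Filter

/-- For a balanced asymmetric chain: a pointwise bound on symmetric cut flow,
and the resulting simplification of the infinite flow property. -/
theorem balancedAsymmetric_infFlow_iff {s : ℕ}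
    (A : ℕ → Matrix (Fin s) (Fin s) ℝ)
    (hrs : ∀ n, (∀ i j, 0 ≤ A n i j) ∧ ∀ i, ∑ j, A n i j = 1)
    (M : ℝ) (hM : 1 ≤ M)
    (hbal : ∀ (S₁ S₂ : Finset (Fin s)), S₁.Nonempty → S₂.Nonempty →
      S₁.card = S₂.card → ∀ n,
      ∑ i ∈ S₁, ∑ j ∈ S₂ᶜ, A n i j ≤ M * ∑ i ∈ S₁ᶜ, ∑ j ∈ S₂, A n i j) :
    (∀ (T : Finset (Fin s)), T.Nonempty → T ≠ Finset.univ → ∀ n,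
      ∑ i ∈ T, ∑ j ∈ Tᶜ, (A n i j + A n j i) ≤
        (M + 1) * ∑ i ∈ Tᶜ, ∑ j ∈ T, A n i j) ∧
    ((∀ T : Finset (Fin s), T.Nonempty → T ≠ Finset.univ →
      Tendsto (fun N => ∑ n ∈ Finset.range N,
        ∑ i ∈ T, ∑ j ∈ Tᶜ, (A n i j + A n j i)) atTop atTop)
     ↔
     (∀ T : Finset (Fin s), T.Nonempty → T ≠ Finset.univ →
      Tendsto (fun N => ∑ n ∈ Finset.range N,
        ∑ i ∈ Tᶜ, ∑ j ∈ T, A n i j) atTop atTop)) := by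
  have key : ∀ (T : Finset (Fin s)), T.Nonempty → T ≠ Finset.univ → ∀ n,
      ∑ i ∈ T, ∑ j ∈ Tᶜ, (A n i j + A n j i) ≤
        (M + 1) * ∑ i ∈ Tᶜ, ∑ j ∈ T, A n i j := by
    intro T hT hTu n
    have hswap : ∑ i ∈ T, ∑ j ∈ Tᶜ, A n j i = ∑ i ∈ Tᶜ, ∑ j ∈ T, A n i j :=
      Finset.sum_comm
    have hb := hbal T T hT hT rfl n
    calc ∑ i ∈ T, ∑ j ∈ Tᶜ, (A n i j + A n j i)
        = (∑ i ∈ T, ∑ j ∈ Tᶜ, A n i j) + ∑ i ∈ T, ∑ j ∈ Tᶜ, A n j i := by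
          simp [Finset.sum_add_distrib]
      _ ≤ M * (∑ i ∈ Tᶜ, ∑ j ∈ T, A n i j) + ∑ i ∈ Tᶜ, ∑ j ∈ T, A n i j := by
          rw [hswap]; exact add_le_add_left hb _
      _ = (M + 1) * ∑ i ∈ Tᶜ, ∑ j ∈ T, A n i j := by ring
  refine ⟨key, ?_, ?_⟩
  · -- infinite flow ⇒ cut diverges
    intro h T hT hTu
    have hsym := h T hT hTu
    have hMpos : (0:ℝ) < M + 1 := by linarith
    have : Tendsto (fun N => (M + 1)⁻¹ * ∑ n ∈ Finset.range N,
        ∑ i ∈ T, ∑ j ∈ Tᶜ, (A n i j + A n j i)) atTop atTop :=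
      hsym.const_mul_atTop (by positivity)
    refine tendsto_atTop_mono ?_ this
    intro N
    rw [inv_mul_le_iff₀ hMpos, Finset.mul_sum]
    exact Finset.sum_le_sum fun n _ => key T hT hTu n
  · -- cut diverges ⇒ infinite flow
    intro h T hT hTu
    have hcut := h T hT hTu
    refine tendsto_atTop_mono ?_ hcut
    intro N
    refine Finset.sum_le_sum fun n _ => ?_
    have hswap : ∑ i ∈ Tᶜ, ∑ j ∈ T, A n i j = ∑ i ∈ T, ∑ j ∈ Tᶜ, A n j i :=
      Finset.sum_comm
    rw [hswap]
    refine Finset.sum_le_sum fun i _ => Finset.sum_le_sum fun j _ => ?_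
    have := (hrs n).1 i j
    linarith
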